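/- Let n ≥ 1, let B_r(x₀) ⊂ ℝⁿ be an open ball, and let u be a C² function on a neighborhood of the closed ball satisfying Δu ≥ c in B_r(x₀) for some constant c > 0 and u(x₀) ≥ 0. Then sup over the closed ball B_r(x₀) of u is at least c·r²/(2n). -/

import Mathlib

open Metric Set Filter

/-- Second derivative test: if `g` has a local max at `0`, has derivative `dg t` at every
`t` near `0`, and `dg` has derivative `g2` at `0`, then `g2 ≤ 0`. -/
lemma second_deriv_test_aux {g dg : ℝ → ℝ} {g2 : ℝ} (hmax : IsLocalMax g 0)
    (hg : ∀ᶠ t in nhds (0 : ℝ), HasDerivAt g (dg t) t)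
    (hdg : HasDerivAt dg g2 0) : g2 ≤ 0 := by
  by_contra hpos
  push_neg at hpos
  have hdg0 : dg 0 = 0 := hmax.hasDerivAt_eq_zero hg.self_of_nhds
  have hslope := hasDerivAt_iff_tendsto_slope.1 hdg
  have h1 : ∀ᶠ t in nhdsWithin (0:ℝ) {(0:ℝ)}ᶜ, 0 < slope dg 0 t :=
    hslope.eventually (eventually_gt_nhds hpos)
  have h2 : ∀ᶠ t in nhdsWithin (0:ℝ) (Ioi 0), 0 < dg t := by
    have h1' : ∀ᶠ t in nhdsWithin (0:ℝ) (Ioi 0), 0 < slope dg 0 t :=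
      h1.filter_mono (nhdsWithin_mono 0 (fun x hx => ne_of_gt hx))
    filter_upwards [h1', self_mem_nhdsWithin] with t hts ht
    simp only [slope_def_field, hdg0, sub_zero] at hts
    rcases div_pos_iff.1 hts with ⟨h, _⟩ | ⟨_, h⟩
    · exact h
    · exact absurd h (not_lt.2 (le_of_lt ht))
  have h3 : ∀ᶠ t in nhdsWithin (0:ℝ) (Ioi 0), 0 < dg t ∧ HasDerivAt g (dg t) t :=
    h2.and (hg.filter_mono nhdsWithin_le_nhds)
  obtain ⟨ε, hε, hsub⟩ := mem_nhdsGT_iff_exists_Ioo_subset.1 h3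
  have hε0 : (0:ℝ) < ε := hε
  set b := ε / 2 with hbdef
  have hb : 0 < b := by positivity
  have hbε : b < ε := by simp only [hbdef]; linarith
  have hcont : ContinuousOn g (Icc 0 b) := by
    intro t ht
    rcases eq_or_lt_of_le ht.1 with h0 | h0
    · rw [← h0]; exact hg.self_of_nhds.continuousAt.continuousWithinAt
    · exact ((hsub ⟨h0, lt_of_le_of_lt ht.2 hbε⟩).2).continuousAt.continuousWithinAt
  have hmono := strictMonoOn_of_deriv_pos (convex_Icc 0 b) hcont (fun t ht => by
    rw [interior_Icc] at ht
    rw [(hsub ⟨ht.1, ht.2.trans hbε⟩).2.deriv]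
    exact (hsub ⟨ht.1, ht.2.trans hbε⟩).1)
  have h4 : ∀ᶠ t in nhdsWithin (0:ℝ) (Ioi 0), g t ≤ g 0 :=
    hmax.filter_mono nhdsWithin_le_nhds
  have h5 : ∀ᶠ t in nhdsWithin (0:ℝ) (Ioi 0), t ∈ Ioo (0:ℝ) b :=
    Ioo_mem_nhdsGT_of_mem ⟨le_refl 0, hb⟩
  obtain ⟨t, hgle, htb⟩ := (h4.and h5).exists
  have : g 0 < g t := hmono ⟨le_refl 0, hb.le⟩ ⟨htb.1.le, htb.2.le⟩ htb.1
  linarith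

/-- Quantitative growth for strictly subharmonic functions: if `u` is `C²` on a
neighborhood of the closed ball `B_r(x₀)`, `Δu ≥ c > 0` on the open ball and
`u(x₀) ≥ 0`, then `sup_{closure B_r(x₀)} u ≥ c r² / (2n)`. -/
theorem stmt_7 (n : ℕ) (hn : 1 ≤ n) (x₀ : EuclideanSpace ℝ (Fin n)) (r c : ℝ)
    (hr : 0 < r) (hc : 0 < c) (u : EuclideanSpace ℝ (Fin n) → ℝ)
    (U : Set (EuclideanSpace ℝ (Fin n))) (hU : IsOpen U)
    (hBU : Metric.closedBall x₀ r ⊆ U) (hu : ContDiffOn ℝ 2 u U)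
    (hΔ : ∀ x ∈ Metric.ball x₀ r,
      c ≤ ∑ i : Fin n, iteratedFDeriv ℝ 2 u x
        ![EuclideanSpace.single i (1 : ℝ), EuclideanSpace.single i (1 : ℝ)])
    (hu0 : 0 ≤ u x₀) :
    ∃ x ∈ Metric.closedBall x₀ r, c * r ^ 2 / (2 * n) ≤ u x := by
  by_contra hcon
  push_neg at hcon
  have hnR : (0:ℝ) < n := by exact_mod_cast hn
  have h2n : (0:ℝ) < 2 * n := by linarith
  have hr2 : (0:ℝ) < r ^ 2 := by positivity
  have hKc : IsCompact (Metric.closedBall x₀ r) := isCompact_closedBall x₀ r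
  have hx₀K : x₀ ∈ Metric.closedBall x₀ r := mem_closedBall_self hr.le
  have huc : ContinuousOn u (Metric.closedBall x₀ r) := hu.continuousOn.mono hBU
  obtain ⟨z, hzK, hz⟩ := hKc.exists_isMaxOn ⟨x₀, hx₀K⟩ huc
  set M := u z with hMdef
  have hM0 : 0 ≤ M := le_trans hu0 (hz hx₀K)
  have hMlt : M < c * r ^ 2 / (2 * n) := hcon z hzK
  set a := M / r ^ 2 with hadef
  have ha0 : 0 ≤ a := div_nonneg hM0 hr2.le
  have har : a * r ^ 2 = M := div_mul_cancel₀ M (ne_of_gt hr2)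
  have h2na : 2 * n * a < c := by
    rw [lt_div_iff₀ h2n] at hMlt
    nlinarith [har, hMlt, hr2]
  set w : EuclideanSpace ℝ (Fin n) → ℝ := fun x => u x - a * ‖x - x₀‖ ^ 2 with hwdef
  have hwc : ContinuousOn w (Metric.closedBall x₀ r) :=
    huc.sub (continuous_const.mul
      (((continuous_id.sub continuous_const).norm.pow 2))).continuousOn
  obtain ⟨y', hy'K, hy'⟩ := hKc.exists_isMaxOn ⟨x₀, hx₀K⟩ hwc
  have hwx₀ : w x₀ = u x₀ := by simp [hwdef]
  have hexist : ∃ y ∈ Metric.ball x₀ r, IsMaxOn w (Metric.closedBall x₀ r) y := by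
    by_cases hcase : w y' ≤ w x₀
    · exact ⟨x₀, mem_ball_self hr, fun x hx => le_trans (hy' hx) hcase⟩
    · push_neg at hcase
      refine ⟨y', ?_, hy'⟩
      rw [mem_ball, dist_eq_norm]
      have hd : ‖y' - x₀‖ ≤ r := by
        have := mem_closedBall.1 hy'K; rwa [dist_eq_norm] at this
      have huy' : u y' ≤ M := hz hy'K
      have hwy' : 0 < w y' := lt_of_le_of_lt (hwx₀ ▸ hu0) hcase
      have hwy'e : w y' = u y' - a * ‖y' - x₀‖ ^ 2 := rfl
      by_contra hge
      push_neg at hge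
      have heq : ‖y' - x₀‖ = r := le_antisymm hd hge
      rw [hwy'e, heq] at hwy'
      linarith
  obtain ⟨y, hyb, hymax⟩ := hexist
  have hyK : y ∈ Metric.closedBall x₀ r := ball_subset_closedBall hyb
  have hyU : y ∈ U := hBU hyK
  have hloc : IsLocalMax w y := hymax.isLocalMax
    (Filter.mem_of_superset (isOpen_ball.mem_nhds hyb) ball_subset_closedBall)
  have key : ∀ i : Fin n, iteratedFDeriv ℝ 2 u y
      ![EuclideanSpace.single i (1:ℝ), EuclideanSpace.single i (1:ℝ)] ≤ 2 * a := by
    intro i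
    set e : EuclideanSpace ℝ (Fin n) := EuclideanSpace.single i (1:ℝ) with hedef
    have hne : ‖e‖ = 1 := by rw [hedef, EuclideanSpace.norm_single]; norm_num
    set L : ℝ → EuclideanSpace ℝ (Fin n) := fun t => y + t • e with hLdef
    have hLc : Continuous L := continuous_const.add (continuous_id.smul continuous_const)
    have hL0 : L 0 = y := by simp [hLdef]
    set B : ℝ := 2 * (inner ℝ (y - x₀) e : ℝ) with hBdef
    set C : ℝ := ‖y - x₀‖ ^ 2 with hCdef
    have hq : ∀ t : ℝ, ‖L t - x₀‖ ^ 2 = C + B * t + t ^ 2 := by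
      intro t
      have h1 : L t - x₀ = (y - x₀) + t • e := by show y + t • e - x₀ = (y - x₀) + t • e; exact add_sub_right_comm _ _ _
      rw [h1, norm_add_sq_real, real_inner_smul_right, norm_smul, hne, hBdef, hCdef,
        Real.norm_eq_abs, mul_one, sq_abs]
      ring
    set g : ℝ → ℝ := fun t => u (L t) - a * (C + B * t + t ^ 2) with hgdef
    have hgw : ∀ t, g t = w (L t) := by
      intro t; rw [hgdef]; simp only [hwdef, hq t]
    have hg0 : g 0 = w y := by rw [hgw 0, hL0]
    have hgmax : IsLocalMax g 0 := by
      have hT : Filter.Tendsto L (nhds 0) (nhds y) := by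
        rw [← hL0]; exact hLc.continuousAt
      have hev : ∀ᶠ t in nhds (0:ℝ), w (L t) ≤ w y := hT.eventually hloc
      filter_upwards [hev] with t ht
      rw [hgw t, hg0]; exact ht
    set F := fderiv ℝ u with hFdef
    have hUev : ∀ᶠ t in nhds (0:ℝ), L t ∈ U := by
      have hT : Filter.Tendsto L (nhds 0) (nhds y) := by
        rw [← hL0]; exact hLc.continuousAt
      exact hT.eventually (hU.mem_nhds hyU)
    set dg : ℝ → ℝ := fun t => F (L t) e - a * (B + 2 * t) with hdgdef
    have hLd : ∀ t : ℝ, HasDerivAt L e t := by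
      intro t
      have h1 : HasDerivAt (fun s : ℝ => s • e) ((1:ℝ) • e) t := (hasDerivAt_id t).smul_const e
      rw [one_smul] at h1
      exact h1.const_add y
    have hgd : ∀ᶠ t in nhds (0:ℝ), HasDerivAt g (dg t) t := by
      filter_upwards [hUev] with t ht
      have hud : DifferentiableAt ℝ u (L t) :=
        (hu.differentiableOn two_ne_zero).differentiableAt (hU.mem_nhds ht)
      have hcomp : HasDerivAt (fun s => u (L s)) (F (L t) e) t :=
        hud.hasFDerivAt.comp_hasDerivAt t (hLd t)
      have hpoly : HasDerivAt (fun s : ℝ => a * (C + B * s + s ^ 2)) (a * (B + 2 * t)) t := by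
        have h2 : HasDerivAt (fun s : ℝ => C + B * s + s ^ 2) (B + 2 * t) t := by
          have := (((hasDerivAt_id t).const_mul B).const_add C).add (hasDerivAt_pow 2 t)
          simpa [mul_comm, Pi.add_def] using this
        exact h2.const_mul a
      exact hcomp.sub hpoly
    have hFd : DifferentiableAt ℝ F y := by
      have hF1 : ContDiffOn ℝ 1 F U := hu.fderiv_of_isOpen hU (by norm_num)
      exact (hF1.differentiableOn one_ne_zero).differentiableAt (hU.mem_nhds hyU)
    have hdgd : HasDerivAt dg (iteratedFDeriv ℝ 2 u y ![e, e] - 2 * a) 0 := by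
      have h1 : HasDerivAt (fun t => F (L t)) (fderiv ℝ F y e) 0 := by
        have hFd' : HasFDerivAt F (fderiv ℝ F y) (L 0) := hL0 ▸ hFd.hasFDerivAt
        exact hFd'.comp_hasDerivAt 0 (hLd 0)
      have h2 : HasDerivAt (fun t => F (L t) e) (fderiv ℝ F y e e) 0 := by
        simpa using h1.clm_apply (hasDerivAt_const 0 e)
      have h3 : HasDerivAt (fun t : ℝ => a * (B + 2 * t)) (2 * a) 0 := by
        have := (((hasDerivAt_id (0:ℝ)).const_mul 2).const_add B).const_mul a
        simpa [mul_comm] using this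
      have h4 := h2.sub h3
      have h5 : iteratedFDeriv ℝ 2 u y ![e, e] = fderiv ℝ F y e e := by
        rw [hFdef, iteratedFDeriv_two_apply]
        simp
      rw [h5]
      exact h4
    have := second_deriv_test_aux hgmax hgd hdgd
    have : iteratedFDeriv ℝ 2 u y ![e, e] ≤ 2 * a := by linarith
    exact this
  have hsum := hΔ y hyb
  have hsum2 : ∑ i : Fin n, iteratedFDeriv ℝ 2 u y
      ![EuclideanSpace.single i (1:ℝ), EuclideanSpace.single i (1:ℝ)]
      ≤ ∑ _i : Fin n, (2 * a) := Finset.sum_le_sum (fun i _ => key i)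
  rw [Finset.sum_const, Finset.card_univ, Fintype.card_fin, nsmul_eq_mul] at hsum2
  have hring : (n : ℝ) * (2 * a) = 2 * n * a := by ring
  rw [hring] at hsum2
  linarith
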